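/- arXiv:1701.02564 — 2 statements merged into one kernel-verified Lean document; each statement's English description precedes it below -/
import Mathlib

section
/- Let H be a complex Hilbert space, J a nonempty countable index set, and u_i, v_i ∈ B(H) (i ∈ J) such that v_i u_j = δ_{ij} I for all i,j ∈ J and, for every ξ ∈ H, the family (u_i(v_i ξ))_{i∈J} sums unconditionally to ξ. Let x ∈ B(H) and suppose α(x) ∈ B(H) is an operator such that for every ξ ∈ H the family (u_i(x(v_i ξ)))_{i∈J} sums unconditionally to α(x)ξ. Then for every y ∈ B(H): α(x)y = yα(x) if and only if x·(v_j y u_k) = (v_j y u_k)·x for all j, k ∈ J. -/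
open scoped ENNReal
open ContinuousLinearMap

noncomputable section

/-- `ℓ²(Λ; H)`: square-summable `H`-valued families indexed by `Λ`. -/
abbrev L2 (Λ : Type*) (H : Type*) [NormedAddCommGroup H] [InnerProductSpace ℂ H] :
    Type _ :=
  lp (fun _ : Λ => H) 2

variable {Λ H : Type*} [NormedAddCommGroup H] [InnerProductSpace ℂ H]

open Classical in
/-- `ξ ⊗ e_w`: the element of `ℓ²(Λ;H)` supported at `w` with value `ξ`. -/
def el (w : Λ) (ξ : H) : L2 Λ H := lp.single 2 w ξ

open Classical in
/-- `ξ ↦ ξ ⊗ e_w` as a continuous linear map. -/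
def elCLM (w : Λ) : H →L[ℂ] L2 Λ H :=
  LinearMap.mkContinuous
    { toFun := fun ξ => el w ξ
      map_add' := by
        intro ξ η
        apply lp.ext
        funext j
        by_cases h : j = w
        · subst h; simp [el, lp.single_apply_self]
        · simp [el, lp.single_apply_ne _ _ _ h]
      map_smul' := by
        intro c ξ
        simp [el, lp.single_smul] }
    1
    (by
      intro ξ
      simp only [LinearMap.coe_mk, AddHom.coe_mk, one_mul]
      exact le_of_eq (lp.norm_single (E := fun _ : Λ => H) (p := 2) (by norm_num) w ξ))

/-- Evaluation at coordinate `w` as a continuous linear map. -/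
def coordCLM (w : Λ) : L2 Λ H →L[ℂ] H :=
  LinearMap.mkContinuous
    { toFun := fun f => f w
      map_add' := by intro f g; simp
      map_smul' := by intro c f; simp }
    1
    (by
      intro f
      rw [one_mul]
      exact lp.norm_apply_le_norm (by norm_num) f w)

/-- The `(μ,ν)` matrix entry of an operator on `ℓ²(Λ;H)`. -/
def entry (T : L2 Λ H →L[ℂ] L2 Λ H) (μ ν : Λ) : H →L[ℂ] H :=
  (coordCLM μ).comp (T.comp (elCLM ν))

/-- Membership in the closure of `S` for the weak operator topology. -/
def InWOTClosure {E : Type*} [NormedAddCommGroup E] [InnerProductSpace ℂ E]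
    (S : Set (E →L[ℂ] E)) (T : E →L[ℂ] E) : Prop :=
  ∀ ε > (0 : ℝ), ∀ (n : ℕ) (ξ η : Fin n → E),
    ∃ A ∈ S, ∀ i, ‖(inner ℂ ((T - A) (ξ i)) (η i) : ℂ)‖ < ε

/-- The closure of `S` in the weak operator topology. -/
def wotClosure {E : Type*} [NormedAddCommGroup E] [InnerProductSpace ℂ E]
    (S : Set (E →L[ℂ] E)) : Set (E →L[ℂ] E) :=
  { T | InWOTClosure S T }

/-- A set of operators is WOT-closed. -/
def IsWOTClosed {E : Type*} [NormedAddCommGroup E] [InnerProductSpace ℂ E]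
    (S : Set (E →L[ℂ] E)) : Prop :=
  wotClosure S ⊆ S

/-- A set `S` of operators is reflexive if any operator `T` such that `T h` lies in the
norm-closure of `S h` for every vector `h` belongs to `S`. -/
def IsReflexiveSet {E : Type*} [NormedAddCommGroup E] [InnerProductSpace ℂ E]
    (S : Set (E →L[ℂ] E)) : Prop :=
  ∀ T : E →L[ℂ] E, (∀ h : E, T h ∈ closure ((fun A : E →L[ℂ] E => A h) '' S)) → T ∈ S

/-- The WOT-closed linear span of a set of operators. -/
def wotSpan {E : Type*} [NormedAddCommGroup E] [InnerProductSpace ℂ E]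
    (S : Set (E →L[ℂ] E)) : Set (E →L[ℂ] E) :=
  wotClosure ((Submodule.span ℂ S : Submodule ℂ (E →L[ℂ] E)) : Set (E →L[ℂ] E))

/-- The reversed word. -/
def rev {ι : Type*} (μ : FreeMonoid ι) : FreeMonoid ι :=
  FreeMonoid.ofList (FreeMonoid.toList μ).reverse

/-- Length of a word. -/
def len {ι : Type*} (μ : FreeMonoid ι) : ℕ := (FreeMonoid.toList μ).length

/-- For `α : ι → (X → X)` and a word `μ = μ_m ⋯ μ_1`, the composition
`α_μ = α_{μ_m} ∘ ⋯ ∘ α_{μ_1}`. -/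
def wordMap {ι X : Type*} (α : ι → X → X) (μ : FreeMonoid ι) : X → X :=
  ((FreeMonoid.toList μ).map α).foldr (· ∘ ·) id

/-- For commuting maps `α_1,…,α_d` and `n ∈ ℕ^d`, the composition
`α^n = α_1^{n_1} ∘ ⋯ ∘ α_d^{n_d}`. -/
def multiIter {X : Type*} {d : ℕ} (α : Fin d → X → X) (n : Fin d → ℕ) : X → X :=
  (List.ofFn fun i => (α i)^[n i]).foldr (· ∘ ·) id

/-- The commutant of a set of operators. -/
def commutantS {E : Type*} [NormedAddCommGroup E] [InnerProductSpace ℂ E]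
    (S : Set (E →L[ℂ] E)) : Set (E →L[ℂ] E) :=
  { T | ∀ s ∈ S, T * s = s * T }


/-- commutation criterion for endomorphisms induced by invertible row
operators. -/
theorem statement7
    {H : Type*} [NormedAddCommGroup H] [InnerProductSpace ℂ H] [CompleteSpace H]
    {J : Type*} [Countable J] [Nonempty J]
    (u v : J → (H →L[ℂ] H))
    (hvu : ∀ i : J, v i * u i = 1)
    (hvu' : ∀ i j : J, i ≠ j → v i * u j = 0)
    (hsum : ∀ ξ : H, HasSum (fun i : J => u i (v i ξ)) ξ)
    (x αx : H →L[ℂ] H)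
    (hαx : ∀ ξ : H, HasSum (fun i : J => u i (x (v i ξ))) (αx ξ))
    (y : H →L[ℂ] H) :
    αx * y = y * αx ↔ ∀ j k : J, x * (v j * y * u k) = (v j * y * u k) * x := by
  classical
  have hdel : ∀ (i j : J) (η : H), v i (u j η) = if j = i then η else 0 := by
    intro i j η
    by_cases h : j = i
    · subst h
      have := congrArg (fun T : H →L[ℂ] H => T η) (hvu j)
      simpa using this
    · have := congrArg (fun T : H →L[ℂ] H => T η) (hvu' i j (Ne.symm h))
      simpa [h] using this
  -- v j ∘ αx = x ∘ v j
  have hA : ∀ (j : J) (ξ : H), v j (αx ξ) = x (v j ξ) := by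
    intro j ξ
    have h1 : HasSum (fun i : J => v j (u i (x (v i ξ)))) (v j (αx ξ)) :=
      (v j).hasSum (hαx ξ)
    have h2 : HasSum (fun i : J => v j (u i (x (v i ξ)))) (x (v j ξ)) := by
      have : (fun i : J => v j (u i (x (v i ξ))))
          = fun i : J => if i = j then x (v j ξ) else 0 := by
        funext i
        rw [hdel j i]
        by_cases h : i = j <;> simp [h]
      rw [this]
      exact hasSum_ite_eq j _
    exact h1.unique h2
  -- αx ∘ u k = u k ∘ x
  have hB : ∀ (k : J) (ξ : H), αx (u k ξ) = u k (x ξ) := by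
    intro k ξ
    have h1 := hαx (u k ξ)
    have h2 : HasSum (fun i : J => u i (x (v i (u k ξ)))) (u k (x ξ)) := by
      have : (fun i : J => u i (x (v i (u k ξ))))
          = fun i : J => if i = k then u k (x ξ) else 0 := by
        funext i
        rw [hdel i k]
        by_cases h : k = i
        · subst h; simp
        · simp [h, Ne.symm h]
      rw [this]
      exact hasSum_ite_eq k _
    exact h1.unique h2
  -- entries determine operator
  have hzero : ∀ T : H →L[ℂ] H, (∀ j k : J, v j * T * u k = 0) → T = 0 := by
    intro T hT
    ext ξ
    have hv : ∀ j : J, v j (T ξ) = 0 := by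
      intro j
      have h1 : HasSum (fun k : J => v j (T (u k (v k ξ)))) (v j (T ξ)) :=
        ((v j).comp T).hasSum (hsum ξ)
      have h2 : HasSum (fun k : J => v j (T (u k (v k ξ)))) 0 := by
        have : (fun k : J => v j (T (u k (v k ξ)))) = fun _ : J => 0 := by
          funext k
          have := congrArg (fun S : H →L[ℂ] H => S (v k ξ)) (hT j k)
          simpa using this
        rw [this]
        exact hasSum_zero
      exact h1.unique h2
    have h1 : HasSum (fun j : J => u j (v j (T ξ))) (T ξ) := hsum (T ξ)
    have h2 : HasSum (fun j : J => u j (v j (T ξ))) 0 := by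
      have : (fun j : J => u j (v j (T ξ))) = fun _ : J => 0 := by
        funext j; rw [hv j]; simp
      rw [this]; exact hasSum_zero
    simpa using h1.unique h2
  constructor
  · intro hc j k
    ext ξ
    have : v j (αx (y (u k ξ))) = v j (y (αx (u k ξ))) := by
      have := congrArg (fun T : H →L[ℂ] H => v j (T (u k ξ))) hc
      simpa using this
    rw [hA j, hB k] at this
    simpa using this
  · intro hc
    have h := hzero (αx * y - y * αx) ?_
    · have := sub_eq_zero.mp h
      exact this
    intro j k
    ext ξ
    have e1 : v j (αx (y (u k ξ))) = x (v j (y (u k ξ))) := hA j _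
    have e2 : v j (y (αx (u k ξ))) = v j (y (u k (x ξ))) := by rw [hB k]
    have e3 := congrArg (fun T : H →L[ℂ] H => T ξ) (hc j k)
    simp only [mul_apply_eq_comp] at e3 ⊢
    simp only [sub_apply, map_sub, mul_apply_eq_comp] at *
    rw [e1, e2, e3]
    simp
end
end

section
/- Let H = ℓ²(ℕ;ℂ) with standard orthonormal basis (δ_n)_{n∈ℕ}, and let S₁, S₂ ∈ B(H) be the bounded operators determined by S₁δ_n = δ_{2n} and S₂δ_n = δ_{2n+1}. Let U ∈ B(H) be unitary (U*U = UU* = I). Then the following are equivalent: (i) for every x ∈ B(H), U(S₁xS₁* + S₂xS₂*)U* = S₁(UxU*)S₁* + S₂(UxU*)S₂*; (ii) there exist λ, μ ∈ ℂ with |λ| = |μ| = 1 such that Uδ_n = λμ^{φ(n)}δ_n for every n ∈ ℕ, where φ(n) denotes the number of 1's in the binary expansion of n. -/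
open scoped ENNReal
open ContinuousLinearMap

noncomputable section

variable {Λ H : Type*} [NormedAddCommGroup H] [InnerProductSpace ℂ H]

/-! ### Auxiliary lemmas for statement18 -/

section Aux18

open Complex ContinuousLinearMap

local notation "OP" => (L2 ℕ ℂ →L[ℂ] L2 ℕ ℂ)

lemma el_single (n : ℕ) (c : ℂ) : el n c = lp.single 2 n c := by
  unfold el
  congr!

lemma single_eq_el (n : ℕ) (c : ℂ) : (lp.single 2 n c : L2 ℕ ℂ) = el n c :=
  (el_single n c).symm

lemma el_apply_gen (n k : ℕ) (c : ℂ) : (el n c) k = if k = n then c else 0 := by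
  rw [el_single, lp.single_apply]
  rcases eq_or_ne k n with h | h
  · subst h; rw [if_pos rfl]; exact dif_pos rfl
  · rw [if_neg h]; exact dif_neg h

lemma el_apply (n k : ℕ) : (el n (1:ℂ)) k = if k = n then 1 else 0 :=
  el_apply_gen n k 1

lemma el_apply_self (n : ℕ) : (el n (1:ℂ)) n = 1 := by simp [el_apply]

lemma coord_add (f g : L2 ℕ ℂ) (k : ℕ) : (f + g) k = f k + g k := by
  rw [lp.coeFn_add]; rfl

lemma coord_smul (c : ℂ) (f : L2 ℕ ℂ) (k : ℕ) : (c • f) k = c * f k := by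
  rw [lp.coeFn_smul]; rfl

lemma coord_zero (k : ℕ) : (0 : L2 ℕ ℂ) k = 0 := by
  rw [lp.coeFn_zero]; rfl

lemma coord_ext (f g : L2 ℕ ℂ) (h : ∀ k, f k = g k) : f = g :=
  lp.ext (funext h)

lemma inner_el (k : ℕ) (f : L2 ℕ ℂ) : (inner ℂ (el k (1:ℂ)) f : ℂ) = f k := by
  rw [el_single, lp.inner_single_left]
  simp [RCLike.inner_apply]

lemma el_eq_smul (p : ℕ) (c : ℂ) : el p c = c • el p (1:ℂ) := by
  apply coord_ext; intro k
  rw [el_apply_gen, coord_smul, el_apply]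
  by_cases h : k = p <;> simp [h]

lemma el_ne_zero (p : ℕ) : el p (1:ℂ) ≠ 0 := by
  intro h
  have h1 : (el p (1:ℂ)) p = 1 := el_apply_self p
  rw [h, coord_zero] at h1
  exact one_ne_zero h1.symm

lemma smul_cancel {c d : ℂ} {v : L2 ℕ ℂ} (hv : v ≠ 0) (h : c • v = d • v) : c = d := by
  have h2 : (c - d) • v = 0 := by rw [sub_smul, h, sub_self]
  rcases smul_eq_zero.mp h2 with h3 | h3
  · exact sub_eq_zero.mp h3
  · exact absurd h3 hv

lemma opExt (T T' : L2 ℕ ℂ →L[ℂ] L2 ℕ ℂ) (h : ∀ n, T (el n (1:ℂ)) = T' (el n (1:ℂ))) :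
    T = T' := by
  refine ContinuousLinearMap.ext fun f => ?_
  haveI : Fact ((1:ℝ≥0∞) ≤ 2) := ⟨one_le_two⟩
  have hf : HasSum (fun n : ℕ => lp.single 2 n (f n)) f :=
    lp.hasSum_single ENNReal.ofNat_ne_top f
  have h1 : HasSum (fun n : ℕ => T (lp.single 2 n (f n))) (T f) := hf.mapL T
  have h2 : HasSum (fun n : ℕ => T' (lp.single 2 n (f n))) (T' f) := hf.mapL T'
  have hsame : ∀ n : ℕ, T (lp.single 2 n (f n)) = T' (lp.single 2 n (f n)) := by
    intro n
    have he0 : (lp.single 2 n (f n) : L2 ℕ ℂ) = el n (f n) := single_eq_el n (f n)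
    rw [he0, el_eq_smul n (f n), map_smul, map_smul, h n]
  refine h1.unique ?_
  exact (funext hsame : (fun n : ℕ => T (lp.single 2 n (f n))) = _) ▸ h2

lemma phi_even (m : ℕ) :
    (Nat.digits 2 (2*m)).count 1 = (Nat.digits 2 m).count 1 := by
  rcases Nat.eq_zero_or_pos m with h | h
  · subst h; norm_num
  · rw [Nat.digits_def' (by norm_num : (1:ℕ) < 2) (by omega : 0 < 2*m)]
    have h1 : 2 * m % 2 = 0 := by omega
    have h2 : 2 * m / 2 = m := by omega
    rw [h1, h2]
    simp [List.count_cons]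

lemma phi_odd (m : ℕ) :
    (Nat.digits 2 (2*m+1)).count 1 = (Nat.digits 2 m).count 1 + 1 := by
  rw [Nat.digits_def' (by norm_num : (1:ℕ) < 2) (by omega : 0 < 2*m+1)]
  have h1 : (2 * m + 1) % 2 = 1 := by omega
  have h2 : (2 * m + 1) / 2 = m := by omega
  rw [h1, h2]
  simp [List.count_cons]

lemma adj_coord (S : OP) (g : ℕ → ℕ) (hS : ∀ n, S (el n (1:ℂ)) = el (g n) (1:ℂ))
    (f : L2 ℕ ℂ) (k : ℕ) : (ContinuousLinearMap.adjoint S f) k = f (g k) := by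
  rw [← inner_el k (ContinuousLinearMap.adjoint S f),
    ContinuousLinearMap.adjoint_inner_right, hS k, inner_el]

lemma adj_el_hit (S : OP) (g : ℕ → ℕ) (hg : Function.Injective g)
    (hS : ∀ n, S (el n (1:ℂ)) = el (g n) (1:ℂ)) (k : ℕ) :
    ContinuousLinearMap.adjoint S (el (g k) (1:ℂ)) = el k (1:ℂ) := by
  apply coord_ext; intro j
  rw [adj_coord S g hS, el_apply, el_apply]
  by_cases h : j = k
  · subst h; simp
  · have : g j ≠ g k := fun hc => h (hg hc)
    simp [h, this]

lemma adj_el_miss (S : OP) (g : ℕ → ℕ)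
    (hS : ∀ n, S (el n (1:ℂ)) = el (g n) (1:ℂ)) (m : ℕ) (hm : ∀ k, g k ≠ m) :
    ContinuousLinearMap.adjoint S (el m (1:ℂ)) = 0 := by
  apply coord_ext; intro j
  rw [adj_coord S g hS, el_apply, coord_zero]
  simp [hm j]

lemma S_coord_hit (S : OP) (g : ℕ → ℕ) (hg : Function.Injective g)
    (hS : ∀ n, S (el n (1:ℂ)) = el (g n) (1:ℂ)) (f : L2 ℕ ℂ) (k : ℕ) :
    (S f) (g k) = f k := by
  rw [← inner_el (g k) (S f), ← ContinuousLinearMap.adjoint_inner_left,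
    adj_el_hit S g hg hS k, inner_el]

lemma S_coord_miss (S : OP) (g : ℕ → ℕ)
    (hS : ∀ n, S (el n (1:ℂ)) = el (g n) (1:ℂ)) (f : L2 ℕ ℂ) (m : ℕ)
    (hm : ∀ k, g k ≠ m) : (S f) m = 0 := by
  rw [← inner_el m (S f), ← ContinuousLinearMap.adjoint_inner_left,
    adj_el_miss S g hS m hm, inner_zero_left]

lemma diag_of_comm (Df : L2 ℕ ℂ → L2 ℕ ℂ)
    (h : ∀ (x : L2 ℕ ℂ →L[ℂ] L2 ℕ ℂ) (n : ℕ), x (Df (el n (1:ℂ))) = Df (x (el n (1:ℂ))))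
    (p : ℕ) : Df (el p (1:ℂ)) = ((Df (el 0 (1:ℂ))) 0) • el p (1:ℂ) := by
  have h0 := h ((elCLM p).comp (coordCLM 0)) 0
  have e1 : ∀ v : L2 ℕ ℂ, ((elCLM p).comp (coordCLM 0)) v = el p (v 0) := fun v => rfl
  rw [e1, e1, el_apply_self, el_eq_smul] at h0
  exact h0.symm

lemma adj_diag (A : OP) (b : ℂ) (h : ∀ p, A (el p (1:ℂ)) = b • el p (1:ℂ)) (p : ℕ) :
    ContinuousLinearMap.adjoint A (el p (1:ℂ)) = (starRingEnd ℂ) b • el p (1:ℂ) := by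
  apply coord_ext; intro q
  rw [← inner_el q (ContinuousLinearMap.adjoint A (el p (1:ℂ))),
    ContinuousLinearMap.adjoint_inner_right, h q, inner_smul_left, inner_el,
    coord_smul, el_apply]

end Aux18

set_option maxHeartbeats 2000000 in
/-- characterization of the unitaries on `ℓ²(ℕ)` commuting with the
endomorphism induced by the Cuntz family `S₁δ_n = δ_{2n}`, `S₂δ_n = δ_{2n+1}`. -/
theorem statement18
    (S1 S2 U : L2 ℕ ℂ →L[ℂ] L2 ℕ ℂ)
    (hS1 : ∀ n : ℕ, S1 (el n (1 : ℂ)) = el (2 * n) (1 : ℂ))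
    (hS2 : ∀ n : ℕ, S2 (el n (1 : ℂ)) = el (2 * n + 1) (1 : ℂ))
    (hU1 : ContinuousLinearMap.adjoint U * U = 1)
    (hU2 : U * ContinuousLinearMap.adjoint U = 1) :
    (∀ x : L2 ℕ ℂ →L[ℂ] L2 ℕ ℂ,
        U * (S1 * x * ContinuousLinearMap.adjoint S1 +
              S2 * x * ContinuousLinearMap.adjoint S2) * ContinuousLinearMap.adjoint U =
          S1 * (U * x * ContinuousLinearMap.adjoint U) * ContinuousLinearMap.adjoint S1 +
            S2 * (U * x * ContinuousLinearMap.adjoint U) * ContinuousLinearMap.adjoint S2) ↔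
      ∃ lam mu : ℂ, ‖lam‖ = 1 ∧ ‖mu‖ = 1 ∧
        ∀ n : ℕ, U (el n (1 : ℂ)) = (lam * mu ^ ((Nat.digits 2 n).count 1)) • el n (1 : ℂ) := by
    classical
  have h1Upt : ∀ f : L2 ℕ ℂ, ContinuousLinearMap.adjoint U (U f) = f := by
    intro f
    have h := ContinuousLinearMap.ext_iff.mp hU1 f
    simpa [ContinuousLinearMap.mul_apply] using h
  have hUUpt : ∀ f : L2 ℕ ℂ, U (ContinuousLinearMap.adjoint U f) = f := by
    intro f
    have h := ContinuousLinearMap.ext_iff.mp hU2 f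
    simpa [ContinuousLinearMap.mul_apply] using h
  have hg1 : Function.Injective (fun n : ℕ => 2*n) := by
    intro a b hab
    have : 2*a = 2*b := hab
    omega
  have hg2 : Function.Injective (fun n : ℕ => 2*n+1) := by
    intro a b hab
    have : 2*a+1 = 2*b+1 := hab
    omega
  have a1 : ∀ (f : L2 ℕ ℂ) (k : ℕ), (ContinuousLinearMap.adjoint S1 f) k = f (2*k) :=
    fun f k => adj_coord S1 (fun n => 2*n) hS1 f k
  have a2 : ∀ (f : L2 ℕ ℂ) (k : ℕ), (ContinuousLinearMap.adjoint S2 f) k = f (2*k+1) :=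
    fun f k => adj_coord S2 (fun n => 2*n+1) hS2 f k
  have s1hit : ∀ (f : L2 ℕ ℂ) (k : ℕ), (S1 f) (2*k) = f k :=
    fun f k => S_coord_hit S1 (fun n => 2*n) hg1 hS1 f k
  have s2hit : ∀ (f : L2 ℕ ℂ) (k : ℕ), (S2 f) (2*k+1) = f k :=
    fun f k => S_coord_hit S2 (fun n => 2*n+1) hg2 hS2 f k
  have s1miss : ∀ (f : L2 ℕ ℂ) (m : ℕ), (∀ k, 2*k ≠ m) → (S1 f) m = 0 :=
    fun f m hm => S_coord_miss S1 (fun n => 2*n) hS1 f m hm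
  have s2miss : ∀ (f : L2 ℕ ℂ) (m : ℕ), (∀ k, 2*k+1 ≠ m) → (S2 f) m = 0 :=
    fun f m hm => S_coord_miss S2 (fun n => 2*n+1) hS2 f m hm
  have cz11 : ∀ f : L2 ℕ ℂ, ContinuousLinearMap.adjoint S1 (S1 f) = f :=
    fun f => coord_ext _ _ fun k => by rw [a1, s1hit]
  have cz21 : ∀ f : L2 ℕ ℂ, ContinuousLinearMap.adjoint S2 (S1 f) = 0 :=
    fun f => coord_ext _ _ fun k => by
      rw [a2, s1miss f (2*k+1) (fun j => by omega), coord_zero]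
  have cz12 : ∀ f : L2 ℕ ℂ, ContinuousLinearMap.adjoint S1 (S2 f) = 0 :=
    fun f => coord_ext _ _ fun k => by
      rw [a1, s2miss f (2*k) (fun j => by omega), coord_zero]
  have cz22 : ∀ f : L2 ℕ ℂ, ContinuousLinearMap.adjoint S2 (S2 f) = f :=
    fun f => coord_ext _ _ fun k => by rw [a2, s2hit]
  have hcomp : ∀ f : L2 ℕ ℂ,
      S1 (ContinuousLinearMap.adjoint S1 f) + S2 (ContinuousLinearMap.adjoint S2 f) = f := by
    intro f
    apply coord_ext
    intro m
    rw [coord_add]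
    rcases Nat.even_or_odd m with ⟨j, hj⟩ | ⟨j, hj⟩
    · have hm : m = 2*j := by omega
      subst hm
      rw [s1hit, a1, s2miss _ _ (fun i => by omega), add_zero]
    · have hm : m = 2*j+1 := by omega
      subst hm
      rw [s2hit, a2, s1miss _ _ (fun i => by omega), zero_add]
  constructor
  · -- forward direction
    intro hyp
    have c11 : ∀ f : L2 ℕ ℂ, ContinuousLinearMap.adjoint S1 (S1 f) = (1:ℂ) • f :=
      fun f => by rw [cz11 f, one_smul]
    have c21 : ∀ f : L2 ℕ ℂ, ContinuousLinearMap.adjoint S2 (S1 f) = (0:ℂ) • f :=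
      fun f => by rw [cz21 f, zero_smul]
    have c12 : ∀ f : L2 ℕ ℂ, ContinuousLinearMap.adjoint S1 (S2 f) = (0:ℂ) • f :=
      fun f => by rw [cz12 f, zero_smul]
    have c22 : ∀ f : L2 ℕ ℂ, ContinuousLinearMap.adjoint S2 (S2 f) = (1:ℂ) • f :=
      fun f => by rw [cz22 f, one_smul]
    have key : ∀ (Sl Sk : L2 ℕ ℂ →L[ℂ] L2 ℕ ℂ) (e1 e2 f1 f2 : ℂ),
        (∀ f, ContinuousLinearMap.adjoint S1 (Sl f) = e1 • f) →
        (∀ f, ContinuousLinearMap.adjoint S2 (Sl f) = e2 • f) →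
        (∀ f, ContinuousLinearMap.adjoint Sk (S1 f) = f1 • f) →
        (∀ f, ContinuousLinearMap.adjoint Sk (S2 f) = f2 • f) →
        ∀ (x : L2 ℕ ℂ →L[ℂ] L2 ℕ ℂ) (n : ℕ),
        f1 • x (ContinuousLinearMap.adjoint S1 (ContinuousLinearMap.adjoint U (Sl (U (el n (1:ℂ)))))) +
          f2 • x (ContinuousLinearMap.adjoint S2 (ContinuousLinearMap.adjoint U (Sl (U (el n (1:ℂ)))))) =
        e1 • ContinuousLinearMap.adjoint Sk (ContinuousLinearMap.adjoint U (S1 (U (x (el n (1:ℂ)))))) +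
          e2 • ContinuousLinearMap.adjoint Sk (ContinuousLinearMap.adjoint U (S2 (U (x (el n (1:ℂ)))))) := by
      intro Sl Sk e1 e2 f1 f2 ha1 ha2 hb1 hb2 x n
      have h := ContinuousLinearMap.ext_iff.mp (hyp x) (Sl (U (el n (1:ℂ))))
      simp only [ContinuousLinearMap.mul_apply, ContinuousLinearMap.add_apply] at h
      rw [ha1, ha2] at h
      simp only [map_smul, h1Upt] at h
      have h2 := congrArg
        (fun v => ContinuousLinearMap.adjoint Sk (ContinuousLinearMap.adjoint U v)) h
      simp only [map_add, map_smul, h1Upt, hb1, hb2] at h2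
      exact h2
    have comm11 : ∀ (x : L2 ℕ ℂ →L[ℂ] L2 ℕ ℂ) (n : ℕ),
        x (ContinuousLinearMap.adjoint S1 (ContinuousLinearMap.adjoint U (S1 (U (el n (1:ℂ)))))) =
          ContinuousLinearMap.adjoint S1 (ContinuousLinearMap.adjoint U (S1 (U (x (el n (1:ℂ)))))) :=
      fun x n => by simpa using key S1 S1 1 0 1 0 c11 c21 c11 c12 x n
    have comm12 : ∀ (x : L2 ℕ ℂ →L[ℂ] L2 ℕ ℂ) (n : ℕ),
        x (ContinuousLinearMap.adjoint S2 (ContinuousLinearMap.adjoint U (S1 (U (el n (1:ℂ)))))) =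
          ContinuousLinearMap.adjoint S2 (ContinuousLinearMap.adjoint U (S1 (U (x (el n (1:ℂ)))))) :=
      fun x n => by simpa using key S1 S2 1 0 0 1 c11 c21 c21 c22 x n
    have comm21 : ∀ (x : L2 ℕ ℂ →L[ℂ] L2 ℕ ℂ) (n : ℕ),
        x (ContinuousLinearMap.adjoint S1 (ContinuousLinearMap.adjoint U (S2 (U (el n (1:ℂ)))))) =
          ContinuousLinearMap.adjoint S1 (ContinuousLinearMap.adjoint U (S2 (U (x (el n (1:ℂ)))))) :=
      fun x n => by simpa using key S2 S1 0 1 1 0 c12 c22 c11 c12 x n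
    have comm22 : ∀ (x : L2 ℕ ℂ →L[ℂ] L2 ℕ ℂ) (n : ℕ),
        x (ContinuousLinearMap.adjoint S2 (ContinuousLinearMap.adjoint U (S2 (U (el n (1:ℂ)))))) =
          ContinuousLinearMap.adjoint S2 (ContinuousLinearMap.adjoint U (S2 (U (x (el n (1:ℂ)))))) :=
      fun x n => by simpa using key S2 S2 0 1 0 1 c12 c22 c21 c22 x n
    obtain ⟨b11, hd11⟩ : ∃ b : ℂ, ∀ p, ContinuousLinearMap.adjoint S1
        (ContinuousLinearMap.adjoint U (S1 (U (el p (1:ℂ))))) = b • el p (1:ℂ) :=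
      ⟨_, fun p => diag_of_comm
        (fun v => ContinuousLinearMap.adjoint S1 (ContinuousLinearMap.adjoint U (S1 (U v)))) comm11 p⟩
    obtain ⟨b12, hd12⟩ : ∃ b : ℂ, ∀ p, ContinuousLinearMap.adjoint S2
        (ContinuousLinearMap.adjoint U (S1 (U (el p (1:ℂ))))) = b • el p (1:ℂ) :=
      ⟨_, fun p => diag_of_comm
        (fun v => ContinuousLinearMap.adjoint S2 (ContinuousLinearMap.adjoint U (S1 (U v)))) comm12 p⟩
    obtain ⟨b21, hd21⟩ : ∃ b : ℂ, ∀ p, ContinuousLinearMap.adjoint S1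
        (ContinuousLinearMap.adjoint U (S2 (U (el p (1:ℂ))))) = b • el p (1:ℂ) :=
      ⟨_, fun p => diag_of_comm
        (fun v => ContinuousLinearMap.adjoint S1 (ContinuousLinearMap.adjoint U (S2 (U v)))) comm21 p⟩
    obtain ⟨b22, hd22⟩ : ∃ b : ℂ, ∀ p, ContinuousLinearMap.adjoint S2
        (ContinuousLinearMap.adjoint U (S2 (U (el p (1:ℂ))))) = b • el p (1:ℂ) :=
      ⟨_, fun p => diag_of_comm
        (fun v => ContinuousLinearMap.adjoint S2 (ContinuousLinearMap.adjoint U (S2 (U v)))) comm22 p⟩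
    have adj_comp : ∀ (Sl Sk : L2 ℕ ℂ →L[ℂ] L2 ℕ ℂ) (b : ℂ),
        (∀ p, ContinuousLinearMap.adjoint Sk
          (ContinuousLinearMap.adjoint U (Sl (U (el p (1:ℂ))))) = b • el p (1:ℂ)) →
        ∀ p, ContinuousLinearMap.adjoint U
          (ContinuousLinearMap.adjoint Sl (U (Sk (el p (1:ℂ))))) =
            (starRingEnd ℂ) b • el p (1:ℂ) := by
      intro Sl Sk b hb p
      have hA : ∀ q, (ContinuousLinearMap.adjoint Sk *
          (ContinuousLinearMap.adjoint U * (Sl * U))) (el q (1:ℂ)) = b • el q (1:ℂ) := by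
        intro q
        simpa [ContinuousLinearMap.mul_apply] using hb q
      have hAdj := adj_diag (ContinuousLinearMap.adjoint Sk *
        (ContinuousLinearMap.adjoint U * (Sl * U))) b hA p
      have hstar : ContinuousLinearMap.adjoint (ContinuousLinearMap.adjoint Sk *
          (ContinuousLinearMap.adjoint U * (Sl * U))) =
          ContinuousLinearMap.adjoint U * (ContinuousLinearMap.adjoint Sl * (U * Sk)) := by
        simp only [← ContinuousLinearMap.star_eq_adjoint, star_mul, star_star, mul_assoc]
      rw [hstar] at hAdj
      simpa [ContinuousLinearMap.mul_apply] using hAdj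
    have mk_r : ∀ (Sl Sk : L2 ℕ ℂ →L[ℂ] L2 ℕ ℂ) (b : ℂ) (m : ℕ → ℕ),
        (∀ p, Sk (el p (1:ℂ)) = el (m p) (1:ℂ)) →
        (∀ p, ContinuousLinearMap.adjoint Sk
          (ContinuousLinearMap.adjoint U (Sl (U (el p (1:ℂ))))) = b • el p (1:ℂ)) →
        ∀ p, ContinuousLinearMap.adjoint Sl (U (el (m p) (1:ℂ))) =
          (starRingEnd ℂ) b • U (el p (1:ℂ)) := by
      intro Sl Sk b m hSk hd p
      have h := adj_comp Sl Sk b hd p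
      rw [hSk p] at h
      have h2 := congrArg U h
      rw [hUUpt] at h2
      rw [map_smul] at h2
      exact h2
    have r11 : ∀ p, ContinuousLinearMap.adjoint S1 (U (el (2*p) (1:ℂ))) =
        (starRingEnd ℂ) b11 • U (el p (1:ℂ)) := mk_r S1 S1 b11 (fun p => 2*p) hS1 hd11
    have r21 : ∀ p, ContinuousLinearMap.adjoint S2 (U (el (2*p) (1:ℂ))) =
        (starRingEnd ℂ) b21 • U (el p (1:ℂ)) := mk_r S2 S1 b21 (fun p => 2*p) hS1 hd21
    have r12 : ∀ p, ContinuousLinearMap.adjoint S1 (U (el (2*p+1) (1:ℂ))) =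
        (starRingEnd ℂ) b12 • U (el p (1:ℂ)) := mk_r S1 S2 b12 (fun p => 2*p+1) hS2 hd12
    have r22 : ∀ p, ContinuousLinearMap.adjoint S2 (U (el (2*p+1) (1:ℂ))) =
        (starRingEnd ℂ) b22 • U (el p (1:ℂ)) := mk_r S2 S2 b22 (fun p => 2*p+1) hS2 hd22
    have recE : ∀ p, U (el (2*p) (1:ℂ)) =
        (starRingEnd ℂ) b11 • S1 (U (el p (1:ℂ))) +
          (starRingEnd ℂ) b21 • S2 (U (el p (1:ℂ))) := by
      intro p
      conv_lhs => rw [← hcomp (U (el (2*p) (1:ℂ)))]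
      rw [r11 p, r21 p, map_smul, map_smul]
    have recO : ∀ p, U (el (2*p+1) (1:ℂ)) =
        (starRingEnd ℂ) b12 • S1 (U (el p (1:ℂ))) +
          (starRingEnd ℂ) b22 • S2 (U (el p (1:ℂ))) := by
      intro p
      conv_lhs => rw [← hcomp (U (el (2*p+1) (1:ℂ)))]
      rw [r12 p, r22 p, map_smul, map_smul]
    have hUne : ∀ p, U (el p (1:ℂ)) ≠ 0 := by
      intro p h
      have h3 := h1Upt (el p (1:ℂ))
      rw [h, map_zero] at h3
      exact el_ne_zero p h3.symm
    have row : ∀ (Sl Sl' : L2 ℕ ℂ →L[ℂ] L2 ℕ ℂ) (u1 u2 v1 v2 d : ℂ),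
        (∀ p, ContinuousLinearMap.adjoint S1
          (ContinuousLinearMap.adjoint U (Sl (U (el p (1:ℂ))))) = u1 • el p (1:ℂ)) →
        (∀ p, ContinuousLinearMap.adjoint S2
          (ContinuousLinearMap.adjoint U (Sl (U (el p (1:ℂ))))) = u2 • el p (1:ℂ)) →
        (∀ p, ContinuousLinearMap.adjoint Sl' (U (el (2*p) (1:ℂ))) =
          (starRingEnd ℂ) v1 • U (el p (1:ℂ))) →
        (∀ p, ContinuousLinearMap.adjoint Sl' (U (el (2*p+1) (1:ℂ))) =
          (starRingEnd ℂ) v2 • U (el p (1:ℂ))) →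
        (∀ f, ContinuousLinearMap.adjoint Sl' (Sl f) = d • f) →
        u1 * (starRingEnd ℂ) v1 + u2 * (starRingEnd ℂ) v2 = d := by
      intro Sl Sl' u1 u2 v1 v2 d hX1 hX2 hr1 hr2 hcz
      have h1 : ContinuousLinearMap.adjoint U (Sl (U (el 0 (1:ℂ)))) =
          u1 • el (2*0) (1:ℂ) + u2 • el (2*0+1) (1:ℂ) := by
        conv_lhs => rw [← hcomp (ContinuousLinearMap.adjoint U (Sl (U (el 0 (1:ℂ)))))]
        rw [hX1 0, hX2 0, map_smul, map_smul, hS1 0, hS2 0]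
      have h2 := congrArg U h1
      rw [hUUpt] at h2
      rw [map_add, map_smul, map_smul] at h2
      have h3 := congrArg (ContinuousLinearMap.adjoint Sl') h2
      rw [hcz, map_add, map_smul, map_smul, hr1 0, hr2 0, smul_smul, smul_smul,
        ← add_smul] at h3
      exact (smul_cancel (hUne 0) h3).symm
    have row11 : b11 * (starRingEnd ℂ) b11 + b12 * (starRingEnd ℂ) b12 = 1 :=
      row S1 S1 b11 b12 b11 b12 1 hd11 hd12 r11 r12 c11
    have row21 : b21 * (starRingEnd ℂ) b11 + b22 * (starRingEnd ℂ) b12 = 0 :=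
      row S2 S1 b21 b22 b11 b12 0 hd21 hd22 r11 r12 c12
    have row22 : b21 * (starRingEnd ℂ) b21 + b22 * (starRingEnd ℂ) b22 = 1 :=
      row S2 S2 b21 b22 b21 b22 1 hd21 hd22 r21 r22 c22
    have cE : ∀ k, (U (el 0 (1:ℂ))) (2*k) = (starRingEnd ℂ) b11 * (U (el 0 (1:ℂ))) k := by
      intro k
      have h := recE 0
      rw [show (2*0 : ℕ) = 0 by norm_num] at h
      have h2 : (U (el 0 (1:ℂ))) (2*k) = ((starRingEnd ℂ) b11 • S1 (U (el 0 (1:ℂ))) +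
          (starRingEnd ℂ) b21 • S2 (U (el 0 (1:ℂ)))) (2*k) := by rw [← h]
      rw [coord_add, coord_smul, coord_smul, s1hit,
        s2miss _ _ (fun i => by omega), mul_zero, add_zero] at h2
      exact h2
    have cO : ∀ k, (U (el 0 (1:ℂ))) (2*k+1) = (starRingEnd ℂ) b21 * (U (el 0 (1:ℂ))) k := by
      intro k
      have h := recE 0
      rw [show (2*0 : ℕ) = 0 by norm_num] at h
      have h2 : (U (el 0 (1:ℂ))) (2*k+1) = ((starRingEnd ℂ) b11 • S1 (U (el 0 (1:ℂ))) +
          (starRingEnd ℂ) b21 • S2 (U (el 0 (1:ℂ)))) (2*k+1) := by rw [← h]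
      rw [coord_add, coord_smul, coord_smul, s2hit,
        s1miss _ _ (fun i => by omega), mul_zero, zero_add] at h2
      exact h2
    have hc0 : (U (el 0 (1:ℂ))) 0 ≠ 0 := by
      intro h0
      have hall : ∀ k, (U (el 0 (1:ℂ))) k = 0 := by
        intro k
        induction k using Nat.strong_induction_on with
        | _ k ih =>
          rcases Nat.even_or_odd k with ⟨j, hj⟩ | ⟨j, hj⟩
          · have hk : k = 2*j := by omega
            subst hk
            by_cases hj0 : j = 0
            · subst hj0
              rw [show (2*0 : ℕ) = 0 by norm_num]
              exact h0
            · rw [cE j, ih j (by omega), mul_zero]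
          · have hk : k = 2*j+1 := by omega
            subst hk
            rw [cO j, ih j (by omega), mul_zero]
      exact hUne 0 (coord_ext _ _ (fun k => by rw [hall k, coord_zero]))
    have hcb11 : (starRingEnd ℂ) b11 = 1 := by
      have h := cE 0
      rw [show (2*0 : ℕ) = 0 by norm_num] at h
      have h2 : ((starRingEnd ℂ) b11 - 1) * (U (el 0 (1:ℂ))) 0 = 0 := by
        rw [sub_mul, one_mul, ← h, sub_self]
      rcases mul_eq_zero.mp h2 with h3 | h3
      · exact sub_eq_zero.mp h3
      · exact absurd h3 hc0
    have hb11 : b11 = 1 := by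
      have h := congrArg (starRingEnd ℂ) hcb11
      simpa using h
    have hb12 : b12 = 0 := by
      have h2 : b12 * (starRingEnd ℂ) b12 = 0 := by
        have h := row11
        rw [hb11] at h
        simp only [map_one, one_mul] at h
        linear_combination h
      rw [Complex.mul_conj] at h2
      exact Complex.normSq_eq_zero.mp (by exact_mod_cast h2)
    have hb21 : b21 = 0 := by
      have h := row21
      rw [hcb11, hb12, mul_one, map_zero, mul_zero, add_zero] at h
      exact h
    have hb22 : b22 * (starRingEnd ℂ) b22 = 1 := by
      have h := row22
      rw [hb21, map_zero, mul_zero, zero_add] at h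
      exact h
    have hmu : ‖(starRingEnd ℂ) b22‖ = 1 := by
      have h : ‖b22‖ * ‖b22‖ = 1 := by
        have h2 := congrArg norm hb22
        rwa [norm_mul, RCLike.norm_conj, norm_one] at h2
      have hn := norm_nonneg b22
      have h3 : ‖b22‖ = 1 := by nlinarith
      rw [RCLike.norm_conj, h3]
    have recE' : ∀ p, U (el (2*p) (1:ℂ)) = S1 (U (el p (1:ℂ))) := by
      intro p
      rw [recE p, hcb11, one_smul, hb21, map_zero, zero_smul, add_zero]
    have recO' : ∀ p, U (el (2*p+1) (1:ℂ)) = (starRingEnd ℂ) b22 • S2 (U (el p (1:ℂ))) := by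
      intro p
      rw [recO p, hb12, map_zero, zero_smul, zero_add]
    have hU00 : U (el 0 (1:ℂ)) = S1 (U (el 0 (1:ℂ))) := by
      have h := recE' 0
      rwa [show (2*0 : ℕ) = 0 by norm_num] at h
    have hzero : ∀ k, 1 ≤ k → (U (el 0 (1:ℂ))) k = 0 := by
      intro k
      induction k using Nat.strong_induction_on with
      | _ k ih =>
        intro hk1
        rcases Nat.even_or_odd k with ⟨j, hj⟩ | ⟨j, hj⟩
        · have hk : k = 2*j := by omega
          subst hk
          have hj1 : 1 ≤ j := by omega
          have hco : (U (el 0 (1:ℂ))) (2*j) = (S1 (U (el 0 (1:ℂ)))) (2*j) := by rw [← hU00]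
          rw [hco, s1hit]
          exact ih j (by omega) hj1
        · have hk : k = 2*j+1 := by omega
          subst hk
          have hco : (U (el 0 (1:ℂ))) (2*j+1) = (S1 (U (el 0 (1:ℂ)))) (2*j+1) := by rw [← hU00]
          rw [hco, s1miss _ _ (fun i => by omega)]
    have hUe0 : U (el 0 (1:ℂ)) = ((U (el 0 (1:ℂ))) 0) • el 0 (1:ℂ) := by
      apply coord_ext
      intro k
      rw [coord_smul, el_apply]
      rcases Nat.eq_zero_or_pos k with hk | hk
      · subst hk
        rw [if_pos rfl, mul_one]
      · rw [if_neg (by omega), mul_zero]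
        exact hzero k hk
    have hlam : ‖(U (el 0 (1:ℂ))) 0‖ = 1 := by
      have hi : (inner ℂ (U (el 0 (1:ℂ))) (U (el 0 (1:ℂ))) : ℂ) =
          inner ℂ (el 0 (1:ℂ)) (el 0 (1:ℂ)) := by
        rw [← ContinuousLinearMap.adjoint_inner_left U (el 0 (1:ℂ)) (U (el 0 (1:ℂ))),
          h1Upt]
      rw [hUe0, inner_smul_left, inner_smul_right, inner_el, el_apply_self] at hi
      have h2 : ((U (el 0 (1:ℂ))) 0) * (starRingEnd ℂ) ((U (el 0 (1:ℂ))) 0) = 1 := by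
        linear_combination hi
      have h3 : ‖(U (el 0 (1:ℂ))) 0‖ * ‖(U (el 0 (1:ℂ))) 0‖ = 1 := by
        have h4 := congrArg norm h2
        rwa [norm_mul, RCLike.norm_conj, norm_one] at h4
      nlinarith [norm_nonneg ((U (el 0 (1:ℂ))) 0)]
    refine ⟨(U (el 0 (1:ℂ))) 0, (starRingEnd ℂ) b22, hlam, hmu, ?_⟩
    intro n
    induction n using Nat.strong_induction_on with
    | _ n ih =>
      rcases Nat.even_or_odd n with ⟨m, hm⟩ | ⟨m, hm⟩
      · have hn : n = 2*m := by omega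
        subst hn
        by_cases hm0 : m = 0
        · subst hm0
          rw [show (2*0 : ℕ) = 0 by norm_num]
          simpa using hUe0
        · rw [recE' m, ih m (by omega), map_smul, hS1 m, phi_even m]
      · have hn : n = 2*m+1 := by omega
        subst hn
        rw [recO' m, ih m (by omega), map_smul, hS2 m, phi_odd m, smul_smul, pow_succ]
        congr 1
        ring
  · -- reverse direction
    rintro ⟨lam, mu, hlam, hmu, hUe⟩ x
    have hmuc : mu * (starRingEnd ℂ) mu = 1 := by
      have h : Complex.normSq mu = 1 := by
        rw [← Complex.sq_norm, hmu, one_pow]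
      rw [Complex.mul_conj, h, Complex.ofReal_one]
    have hUS1 : U * S1 = S1 * U := by
      apply opExt
      intro n
      rw [ContinuousLinearMap.mul_apply, ContinuousLinearMap.mul_apply, hS1 n,
        hUe (2*n), hUe n, map_smul, hS1 n, phi_even n]
    have hUS2 : U * S2 = mu • (S2 * U) := by
      apply opExt
      intro n
      rw [ContinuousLinearMap.mul_apply, ContinuousLinearMap.smul_apply,
        ContinuousLinearMap.mul_apply, hS2 n, hUe (2*n+1), hUe n, map_smul, hS2 n,
        phi_odd n, smul_smul, pow_succ]
      congr 1
      ring
    have hA1 : ContinuousLinearMap.adjoint S1 * ContinuousLinearMap.adjoint U =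
        ContinuousLinearMap.adjoint U * ContinuousLinearMap.adjoint S1 := by
      have h := congrArg star hUS1
      simpa only [star_mul, ContinuousLinearMap.star_eq_adjoint] using h
    have hA2 : ContinuousLinearMap.adjoint S2 * ContinuousLinearMap.adjoint U =
        (starRingEnd ℂ) mu • (ContinuousLinearMap.adjoint U * ContinuousLinearMap.adjoint S2) := by
      have h := congrArg star hUS2
      simpa only [star_mul, star_smul, ContinuousLinearMap.star_eq_adjoint,
        Complex.star_def] using h
    have e1 : U * (S1 * x * ContinuousLinearMap.adjoint S1) * ContinuousLinearMap.adjoint U =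
        S1 * (U * x * ContinuousLinearMap.adjoint U) * ContinuousLinearMap.adjoint S1 := by
      calc U * (S1 * x * ContinuousLinearMap.adjoint S1) * ContinuousLinearMap.adjoint U
          = (U * S1) * (x * (ContinuousLinearMap.adjoint S1 * ContinuousLinearMap.adjoint U)) := by
            simp only [mul_assoc]
        _ = (S1 * U) * (x * (ContinuousLinearMap.adjoint U * ContinuousLinearMap.adjoint S1)) := by
            rw [hUS1, hA1]
        _ = S1 * (U * x * ContinuousLinearMap.adjoint U) * ContinuousLinearMap.adjoint S1 := by
            simp only [mul_assoc]
    have e2 : U * (S2 * x * ContinuousLinearMap.adjoint S2) * ContinuousLinearMap.adjoint U =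
        S2 * (U * x * ContinuousLinearMap.adjoint U) * ContinuousLinearMap.adjoint S2 := by
      calc U * (S2 * x * ContinuousLinearMap.adjoint S2) * ContinuousLinearMap.adjoint U
          = (U * S2) * (x * (ContinuousLinearMap.adjoint S2 * ContinuousLinearMap.adjoint U)) := by
            simp only [mul_assoc]
        _ = (mu • (S2 * U)) * (x * ((starRingEnd ℂ) mu •
              (ContinuousLinearMap.adjoint U * ContinuousLinearMap.adjoint S2))) := by
            rw [hUS2, hA2]
        _ = (mu * (starRingEnd ℂ) mu) • ((S2 * U) *
              (x * (ContinuousLinearMap.adjoint U * ContinuousLinearMap.adjoint S2))) := by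
            rw [smul_mul_assoc, mul_smul_comm, mul_smul_comm, smul_smul]
        _ = (S2 * U) * (x * (ContinuousLinearMap.adjoint U * ContinuousLinearMap.adjoint S2)) := by
            rw [hmuc, one_smul]
        _ = S2 * (U * x * ContinuousLinearMap.adjoint U) * ContinuousLinearMap.adjoint S2 := by
            simp only [mul_assoc]
    rw [mul_add, add_mul, e1, e2]
end
end
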